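/- Let p = p₂/p₁ with 0 < p < 1 and q = q₂/q₁ with q > 1, where p₁, p₂, q₁, q₂ are positive integers; let μ₁ > 0, μ₂ > 0, 0 < μ₃ < ∞, and τ ∈ (0,1). Suppose V : [0,∞) → [0,∞) is differentiable and satisfies V'(t) ≤ -μ₁·V(t)^p - μ₂·V(t)^q + μ₃ for all t ≥ 0. Set l = (1-p)/(q-p), c_T = π/sin(lπ), and define I_ef(x) = ∫₀^x [p₁q₁·s^(p₁q₁-1) / (μ₁·s^(p₂q₁) + μ₂·s^(p₁q₂))] ds for x ≥ 0 (this integral converges since p₁q₁ - 1 - p₂q₁ ≥ 0). Define T₅ = c_T/(τμ₁(q-p))·(τμ₁/μ₂)^l - I_ef( (μ₃/((1-τ)μ₁))^(1/(p₂q₁)) ) + I_ef(0) and T₆ = c_T/(μ₁(q-p))·(μ₁/(τμ₂))^l - I_ef( (μ₃/((1-τ)μ₂))^(1/(p₁q₂)) ) + I_ef(0). Then for every t ≥ max{T₅, T₆} one has V(t) ≤ R, where R = min{ (μ₃/((1-τ)μ₁))^(1/p) , (μ₃/((1-τ)μ₂))^(1/q) } (Lemma 4). -/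

import Mathlib

open Real

/-- The auxiliary elementary function `I_ef` of Lemma 4 (as a definite
integral from `0`). -/
noncomputable def Ief (p₁ p₂ q₁ q₂ : ℕ) (μ₁ μ₂ x : ℝ) : ℝ :=
  ∫ s in (0 : ℝ)..x,
    ((p₁ * q₁ : ℕ) : ℝ) * s ^ (p₁ * q₁ - 1) /
      (μ₁ * s ^ (p₂ * q₁) + μ₂ * s ^ (p₁ * q₂))

section FTprelude
open Real MeasureTheory Set intervalIntegral

lemma beta_reflection_integral {l : ℝ} (hl0 : 0 < l) (hl1 : l < 1) :
    ∫ u in Set.Ioi (0:ℝ), u ^ (l-1) / (1+u) = π / Real.sin (π * l) := by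
  have h1l : (0:ℝ) < 1 - l := by linarith
  -- Step 1 : real Beta integral
  have hbeta : ∫ x in (0:ℝ)..1, x ^ (l-1) * (1-x) ^ (-l)
      = Real.Gamma l * Real.Gamma (1-l) := by
    have h := Complex.Gamma_mul_Gamma_eq_betaIntegral
      (s := (l:ℂ)) (t := ((1-l:ℝ):ℂ)) (by simpa using hl0) (by simpa using h1l)
    rw [show (l:ℂ) + ((1-l:ℝ):ℂ) = 1 by push_cast; ring, Complex.Gamma_one, one_mul] at h
    have h2 : Complex.betaIntegral (l:ℂ) ((1-l:ℝ):ℂ)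
        = ((∫ x in (0:ℝ)..1, x ^ (l-1) * (1-x) ^ (-l) : ℝ) : ℂ) := by
      rw [Complex.betaIntegral, ← intervalIntegral.integral_ofReal]
      apply intervalIntegral.integral_congr
      intro x hx
      rw [Set.uIcc_of_le (by norm_num : (0:ℝ) ≤ 1)] at hx
      obtain ⟨hx0, hx1⟩ := hx
      simp only [Complex.ofReal_mul]
      rw [Complex.ofReal_cpow hx0, Complex.ofReal_cpow (by linarith : (0:ℝ) ≤ 1 - x)]
      push_cast
      norm_num
    rw [h2, Complex.Gamma_ofReal, Complex.Gamma_ofReal, ← Complex.ofReal_mul] at h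
    exact_mod_cast h.symm
  -- Step 2 : change of variables u ↦ u/(1+u)
  have himg : (fun u : ℝ => u / (1+u)) '' Set.Ioi 0 = Set.Ioo 0 1 := by
    ext y
    constructor
    · rintro ⟨u, hu, rfl⟩
      simp only [Set.mem_Ioi] at hu
      have h1u : (0:ℝ) < 1 + u := by linarith
      constructor
      · positivity
      · rw [div_lt_one h1u]; linarith
    · rintro ⟨hy0, hy1⟩
      have h1y : (0:ℝ) < 1 - y := by linarith
      refine ⟨y / (1 - y), by simp only [Set.mem_Ioi]; positivity, ?_⟩
      have : (1:ℝ) - y ≠ 0 := by linarith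
      field_simp; ring
  have hderiv : ∀ u ∈ Set.Ioi (0:ℝ),
      HasDerivWithinAt (fun u : ℝ => u / (1+u)) ((1+u)^2)⁻¹ (Set.Ioi 0) u := by
    intro u hu
    simp only [Set.mem_Ioi] at hu
    have h1u : (1:ℝ) + u ≠ 0 := by positivity
    have h := (hasDerivAt_id u).div ((hasDerivAt_const u 1).add (hasDerivAt_id u)) h1u
    simp only [id_eq] at h
    have h2 : (1 * (1 + u) - u * (0 + 1)) / (1 + u) ^ 2 = ((1+u)^2)⁻¹ := by
      field_simp; ring
    rw [← h2]
    exact h.hasDerivWithinAt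
  have hinj : Set.InjOn (fun u : ℝ => u / (1+u)) (Set.Ioi 0) := by
    intro u hu v hv h
    simp only [Set.mem_Ioi] at hu hv
    simp only at h
    have h1u : (1:ℝ) + u ≠ 0 := by positivity
    have h1v : (1:ℝ) + v ≠ 0 := by positivity
    field_simp at h
    linarith
  have hcov := MeasureTheory.integral_image_eq_integral_abs_deriv_smul
    measurableSet_Ioi hderiv hinj (fun x : ℝ => x ^ (l-1) * (1-x) ^ (-l))
  rw [himg] at hcov
  -- identify the two integrals
  have hptwise : ∀ u ∈ Set.Ioi (0:ℝ),
      |((1+u)^2)⁻¹| • ((u/(1+u)) ^ (l-1) * (1 - u/(1+u)) ^ (-l))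
        = u ^ (l-1) / (1+u) := by
    intro u hu
    simp only [Set.mem_Ioi] at hu
    have h1u : (0:ℝ) < 1 + u := by linarith
    have key : ∀ y z : ℝ, (1+u)^y * (1+u)^z = (1+u)^(y+z) :=
      fun y z => (Real.rpow_add h1u y z).symm
    have e1 : (1:ℝ) - u/(1+u) = (1+u)⁻¹ := by field_simp; ring
    have e2 : (((1+u):ℝ)^2)⁻¹ = (1+u) ^ (-2 : ℝ) := by
      rw [← Real.rpow_natCast (1+u) 2, ← Real.rpow_neg h1u.le]; norm_num
    rw [e1, smul_eq_mul, abs_of_pos (by positivity),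
      Real.div_rpow hu.le h1u.le, Real.inv_rpow h1u.le, ← Real.rpow_neg h1u.le,
      neg_neg, e2, div_eq_mul_inv (u ^ (l-1)), ← Real.rpow_neg h1u.le (l-1)]
    calc (1+u)^(-2:ℝ) * (u^(l-1) * (1+u)^(-(l-1)) * (1+u)^l)
        = u^(l-1) * ((1+u)^(-(l-1)) * (1+u)^l * (1+u)^(-2:ℝ)) := by ring
      _ = u^(l-1) * (1+u)^(-(l-1) + l + -2) := by rw [key, key]
      _ = u^(l-1) * (1+u)^(-1:ℝ) := by norm_num
      _ = u^(l-1) / (1+u) := by rw [Real.rpow_neg_one]; ring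
  rw [MeasureTheory.setIntegral_congr_fun measurableSet_Ioi hptwise] at hcov
  rw [← hcov, ← MeasureTheory.integral_Ioc_eq_integral_Ioo,
    ← intervalIntegral.integral_of_le (by norm_num : (0:ℝ) ≤ 1), hbeta,
    Real.Gamma_mul_Gamma_one_sub]

variable {p q a b : ℝ}

lemma denom_pos (ha : 0 < a) (hb : 0 < b) {v : ℝ} (hv : 0 < v) :
    0 < a * v ^ p + b * v ^ q := by
  have h1 : 0 < v ^ p := Real.rpow_pos_of_pos hv p
  have h2 : 0 < v ^ q := Real.rpow_pos_of_pos hv q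
  positivity

lemma hcont (ha : 0 < a) (hb : 0 < b) :
    ContinuousOn (fun v : ℝ => (a * v ^ p + b * v ^ q)⁻¹) (Set.Ioi 0) := by
  apply ContinuousOn.inv₀
  · apply ContinuousOn.add
    · exact continuousOn_const.mul (fun x hx =>
        (Real.continuousAt_rpow_const x p (Or.inl (ne_of_gt hx))).continuousWithinAt)
    · exact continuousOn_const.mul (fun x hx =>
        (Real.continuousAt_rpow_const x q (Or.inl (ne_of_gt hx))).continuousWithinAt)
  · exact fun v hv => (denom_pos ha hb hv).ne'

lemma hmeas : Measurable (fun v : ℝ => (a * v ^ p + b * v ^ q)⁻¹) := by fun_prop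

lemma hinteg (hp1 : p < 1) (hq : 1 < q) (ha : 0 < a) (hb : 0 < b) :
    IntegrableOn (fun v : ℝ => (a * v ^ p + b * v ^ q)⁻¹) (Set.Ioi 0) := by
  rw [← Set.Ioc_union_Ioi_eq_Ioi (zero_le_one : (0:ℝ) ≤ 1)]
  apply MeasureTheory.IntegrableOn.union
  · -- on (0,1] : bounded by a⁻¹ * v^(-p)
    have hbound : Integrable (fun v : ℝ => a⁻¹ * v ^ (-p)) (volume.restrict (Set.Ioc 0 1)) := by
      have : IntervalIntegrable (fun v : ℝ => v ^ (-p)) volume 0 1 :=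
        intervalIntegral.intervalIntegrable_rpow' (by linarith)
      exact ((intervalIntegrable_iff_integrableOn_Ioc_of_le zero_le_one).mp this).const_mul _
    refine MeasureTheory.Integrable.mono' hbound
      (hmeas.aestronglyMeasurable.restrict) ?_
    filter_upwards [MeasureTheory.ae_restrict_mem measurableSet_Ioc] with v hv
    obtain ⟨hv0, _⟩ := hv
    have hd := denom_pos (p := p) (q := q) ha hb hv0
    rw [Real.norm_eq_abs, abs_of_pos (by positivity)]
    rw [Real.rpow_neg hv0.le, ← mul_inv]
    apply inv_anti₀
    · positivity
    · nlinarith [Real.rpow_pos_of_pos hv0 q, Real.rpow_pos_of_pos hv0 p]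
  · -- on (1,∞) : bounded by b⁻¹ * v^(-q)
    have hbound : Integrable (fun v : ℝ => b⁻¹ * v ^ (-q)) (volume.restrict (Set.Ioi 1)) := by
      exact ((integrableOn_Ioi_rpow_iff zero_lt_one).mpr (by linarith)).const_mul _
    refine MeasureTheory.Integrable.mono' hbound
      (hmeas.aestronglyMeasurable.restrict) ?_
    filter_upwards [MeasureTheory.ae_restrict_mem measurableSet_Ioi] with v hv
    have hv0 : (0:ℝ) < v := lt_trans zero_lt_one hv
    have hd := denom_pos (p := p) (q := q) ha hb hv0
    rw [Real.norm_eq_abs, abs_of_pos (by positivity)]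
    rw [Real.rpow_neg hv0.le, ← mul_inv]
    apply inv_anti₀
    · positivity
    · nlinarith [Real.rpow_pos_of_pos hv0 q, Real.rpow_pos_of_pos hv0 p]


lemma hvalue {p q a b : ℝ} (hp : 0 < p) (hp1 : p < 1) (hq : 1 < q)
    (ha : 0 < a) (hb : 0 < b) :
    ∫ v in Set.Ioi (0:ℝ), (a * v ^ p + b * v ^ q)⁻¹
      = π / Real.sin (((1-p)/(q-p)) * π) / (a * (q-p)) * (a/b) ^ ((1-p)/(q-p)) := by
  set l : ℝ := (1-p)/(q-p) with hl
  set m : ℝ := q - p with hm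
  have hm0 : 0 < m := by rw [hm]; linarith
  have hl0 : 0 < l := by apply div_pos <;> linarith
  have hl1 : l < 1 := by rw [hl, div_lt_one (by linarith)]; linarith
  set c : ℝ := b / a with hc
  have hc0 : 0 < c := div_pos hb ha
  have hac : a * c = b := by rw [hc]; field_simp
  have himg : (fun v : ℝ => c * v ^ m) '' Set.Ioi 0 = Set.Ioi 0 := by
    ext y
    simp only [Set.mem_image, Set.mem_Ioi]
    constructor
    · rintro ⟨v, hv, rfl⟩
      exact mul_pos hc0 (Real.rpow_pos_of_pos hv m)
    · intro hy
      refine ⟨(y/c) ^ m⁻¹, Real.rpow_pos_of_pos (div_pos hy hc0) _, ?_⟩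
      rw [Real.rpow_inv_rpow (div_pos hy hc0).le hm0.ne']
      field_simp
  have hderiv : ∀ v ∈ Set.Ioi (0:ℝ),
      HasDerivWithinAt (fun v : ℝ => c * v ^ m) (c * (m * v ^ (m-1))) (Set.Ioi 0) v := by
    intro v hv
    exact ((Real.hasDerivAt_rpow_const (Or.inl (ne_of_gt hv))).const_mul c).hasDerivWithinAt
  have hinj : Set.InjOn (fun v : ℝ => c * v ^ m) (Set.Ioi 0) := by
    intro u hu v hv h
    simp only [Set.mem_Ioi] at hu hv
    simp only [mul_right_inj' hc0.ne'] at h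
    have h2 : (u ^ m) ^ m⁻¹ = (v ^ m) ^ m⁻¹ := by rw [h]
    rwa [← Real.rpow_mul hu.le, ← Real.rpow_mul hv.le, mul_inv_cancel₀ hm0.ne',
      Real.rpow_one, Real.rpow_one] at h2
  have hcov := MeasureTheory.integral_image_eq_integral_abs_deriv_smul
    measurableSet_Ioi hderiv hinj (fun u : ℝ => u ^ (l-1) / (1+u))
  rw [himg] at hcov
  have hpt : ∀ v ∈ Set.Ioi (0:ℝ),
      |c * (m * v ^ (m-1))| • ((c * v ^ m) ^ (l-1) / (1 + c * v ^ m))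
        = (a * m * c ^ l) * (a * v ^ p + b * v ^ q)⁻¹ := by
    intro v hv
    simp only [Set.mem_Ioi] at hv
    have hvp : 0 < v ^ p := Real.rpow_pos_of_pos hv p
    have hvm : 0 < v ^ m := Real.rpow_pos_of_pos hv m
    have h1cm : 0 < 1 + c * v ^ m := by positivity
    have hpm : v ^ p * v ^ m = v ^ q := by
      rw [← Real.rpow_add hv]; congr 1; rw [hm]; ring
    have h2 : a * v ^ p * (c * v ^ m) = b * v ^ q := by
      calc a * v ^ p * (c * v ^ m) = (a*c) * (v ^ p * v ^ m) := by ring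
        _ = b * v ^ q := by rw [hac, hpm]
    have hfact : a * v ^ p + b * v ^ q = a * v ^ p * (1 + c * v ^ m) := by
      rw [mul_add, mul_one, h2]
    have hexp : m * (l - 1) = 1 - q := by
      rw [hm, hl]; field_simp; ring
    have collect : v ^ (m-1) * v ^ (1-q) = (v ^ p)⁻¹ := by
      rw [← Real.rpow_add hv, ← Real.rpow_neg hv.le]
      congr 1
      rw [hm]; ring
    have hccl : c * c ^ (l-1) = c ^ l := by
      have : c * c ^ (l-1) = c ^ (1+(l-1)) := by
        rw [Real.rpow_add hc0, Real.rpow_one]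
      rw [this]; norm_num
    rw [hfact, smul_eq_mul, abs_of_pos (by positivity),
      Real.mul_rpow hc0.le hvm.le, ← Real.rpow_mul hv.le, hexp]
    calc c * (m * v ^ (m-1)) * (c ^ (l-1) * v ^ (1-q) / (1 + c * v ^ m))
        = (c * c ^ (l-1)) * m * (v ^ (m-1) * v ^ (1-q)) / (1 + c * v ^ m) := by ring
      _ = c ^ l * m * (v ^ p)⁻¹ / (1 + c * v ^ m) := by rw [hccl, collect]
      _ = (a * m * c ^ l) * (a * v ^ p * (1 + c * v ^ m))⁻¹ := by
          field_simp
  rw [MeasureTheory.setIntegral_congr_fun measurableSet_Ioi hpt,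
    MeasureTheory.integral_const_mul, beta_reflection_integral hl0 hl1] at hcov
  have hcl : (0:ℝ) < c ^ l := Real.rpow_pos_of_pos hc0 l
  have hne : a * m * c ^ l ≠ 0 := by positivity
  have hab : (a/b) ^ l = (c ^ l)⁻¹ := by
    rw [show a/b = c⁻¹ by rw [hc, inv_div], Real.inv_rpow hc0.le]
  have hint : ∫ v in Set.Ioi (0:ℝ), (a * v ^ p + b * v ^ q)⁻¹
      = (π / Real.sin (π * l)) / (a * m * c ^ l) := by
    rw [hcov, mul_comm, mul_div_assoc, div_self hne, mul_one]
  rw [hint, hab, mul_comm l π, div_mul_eq_div_div, div_eq_mul_inv (π / Real.sin (π*l) / (a*m))]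


lemma Ief_eq (p₁ p₂ q₁ q₂ : ℕ) (hp₁ : 0 < p₁) (hp₂ : 0 < p₂) (hq₁ : 0 < q₁) (hq₂ : 0 < q₂)
    {p q A B x : ℝ} (hA : 0 < A) (hB : 0 < B) (hx : 0 ≤ x)
    (hpdef : p = (p₂ : ℝ) / p₁) (hqdef : q = (q₂ : ℝ) / q₁) :
    Ief p₁ p₂ q₁ q₂ A B x
      = ∫ v in Set.Ioo (0:ℝ) (x ^ (p₁ * q₁)), (A * v ^ p + B * v ^ q)⁻¹ := by
  set n : ℕ := p₁ * q₁ with hn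
  have hn0 : 0 < n := Nat.mul_pos hp₁ hq₁
  rcases eq_or_lt_of_le hx with rfl | hx0
  · simp [Ief, Set.Ioo_self, zero_pow hn0.ne']
  have hderiv : ∀ v ∈ Set.Ioo (0:ℝ) x,
      HasDerivWithinAt (fun v : ℝ => v ^ n) ((n:ℝ) * v ^ (n-1)) (Set.Ioo 0 x) v :=
    fun v _ => (hasDerivAt_pow n v).hasDerivWithinAt
  have hinj : Set.InjOn (fun v : ℝ => v ^ n) (Set.Ioo 0 x) := by
    intro u hu v hv h
    exact (pow_left_strictMonoOn₀ hn0.ne').injOn (by exact hu.1.le) (by exact hv.1.le) h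
  have himg : (fun v : ℝ => v ^ n) '' Set.Ioo 0 x = Set.Ioo 0 (x ^ n) := by
    ext y
    simp only [Set.mem_image, Set.mem_Ioo]
    constructor
    · rintro ⟨v, ⟨hv0, hvx⟩, rfl⟩
      exact ⟨pow_pos hv0 n, pow_lt_pow_left₀ hvx hv0.le hn0.ne'⟩
    · rintro ⟨hy0, hyx⟩
      refine ⟨y ^ ((n:ℝ))⁻¹, ⟨Real.rpow_pos_of_pos hy0 _, ?_⟩, ?_⟩
      · have : x = (x ^ n) ^ ((n:ℝ))⁻¹ := by
          rw [← Real.rpow_natCast x n, ← Real.rpow_mul hx,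
            mul_inv_cancel₀ (by exact_mod_cast hn0.ne'), Real.rpow_one]
        rw [this]
        exact Real.rpow_lt_rpow hy0.le hyx (by positivity)
      · rw [← Real.rpow_natCast (y ^ ((n:ℝ))⁻¹) n, ← Real.rpow_mul hy0.le,
          inv_mul_cancel₀ (by exact_mod_cast hn0.ne'), Real.rpow_one]
  have hcov := MeasureTheory.integral_image_eq_integral_abs_deriv_smul
    measurableSet_Ioo hderiv hinj (fun v : ℝ => (A * v ^ p + B * v ^ q)⁻¹)
  rw [himg] at hcov
  rw [hcov, Ief, intervalIntegral.integral_of_le hx, MeasureTheory.integral_Ioc_eq_integral_Ioo]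
  apply MeasureTheory.setIntegral_congr_fun measurableSet_Ioo
  intro v hv
  obtain ⟨hv0, _⟩ := hv
  have ep : ((v ^ n : ℝ)) ^ p = v ^ (p₂ * q₁) := by
    rw [← Real.rpow_natCast v n, ← Real.rpow_mul hv0.le,
      show ((n:ℕ):ℝ) * p = ((p₂ * q₁ : ℕ):ℝ) by
        rw [hpdef, hn]; push_cast; field_simp,
      Real.rpow_natCast]
  have eq' : ((v ^ n : ℝ)) ^ q = v ^ (p₁ * q₂) := by
    rw [← Real.rpow_natCast v n, ← Real.rpow_mul hv0.le,
      show ((n:ℕ):ℝ) * q = ((p₁ * q₂ : ℕ):ℝ) by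
        rw [hqdef, hn]; push_cast; field_simp,
      Real.rpow_natCast]
  have hpos : (0:ℝ) < (n:ℝ) * v ^ (n-1) := by
    have := pow_pos hv0 (n-1)
    positivity
  simp only [smul_eq_mul]
  rw [ep, eq', abs_of_pos hpos, div_eq_mul_inv]

lemma barrier {R : ℝ} {V : ℝ → ℝ} (hVdiff : Differentiable ℝ V)
    (hd : ∀ s, 0 ≤ s → R ≤ V s → deriv V s < 0)
    {t₀ t : ℝ} (h₀ : 0 ≤ t₀) (htt : t₀ ≤ t) (hV₀ : V t₀ ≤ R) : V t ≤ R := by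
  by_contra hVt
  push_neg at hVt
  have htlt : t₀ < t := by
    rcases eq_or_lt_of_le htt with rfl | h
    · exact absurd hV₀ (not_le.mpr hVt)
    · exact h
  set S : Set ℝ := Set.Icc t₀ t ∩ {s | V s ≤ R} with hS
  have hSne : S.Nonempty := ⟨t₀, ⟨le_refl _, htt⟩, hV₀⟩
  have hSbdd : BddAbove S := ⟨t, fun s hs => hs.1.2⟩
  have hSclosed : IsClosed S :=
    isClosed_Icc.inter (isClosed_le hVdiff.continuous continuous_const)
  set m : ℝ := sSup S with hm
  have hmS : m ∈ S := hSclosed.csSup_mem hSne hSbdd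
  have hmt : m < t := lt_of_le_of_ne hmS.1.2 (fun h => absurd (h ▸ hmS.2) (not_le.mpr hVt))
  have hgt : ∀ s, m < s → s ≤ t → R < V s := by
    intro s hms hst
    by_contra hsR
    push_neg at hsR
    have : s ∈ S := ⟨⟨le_trans hmS.1.1 hms.le, hst⟩, hsR⟩
    exact absurd (le_csSup hSbdd this) (not_le.mpr hms)
  have hanti : StrictAntiOn V (Set.Icc m t) := by
    apply strictAntiOn_of_deriv_neg (convex_Icc m t) hVdiff.continuous.continuousOn
    intro s hs
    rw [interior_Icc] at hs
    exact hd s (le_trans (le_trans h₀ hmS.1.1) hs.1.le) (hgt s hs.1 hs.2.le).le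
  have := hanti (Set.left_mem_Icc.mpr hmt.le) (Set.right_mem_Icc.mpr hmt.le) hmt
  have h2 : V m ≤ R := hmS.2
  linarith [hVt]

lemma hmeas' {p q a b : ℝ} : Measurable (fun v : ℝ => (a * v ^ p + b * v ^ q)⁻¹) := by fun_prop

lemma reach {p q a b r t : ℝ} (hp : 0 < p) (hp1 : p < 1) (hq : 1 < q)
    (ha : 0 < a) (hb : 0 < b) (hr : 0 < r)
    (hIntr : IntegrableOn (fun v : ℝ => (a * v ^ p + b * v ^ q)⁻¹) (Set.Ioi r))
    (hcont : ContinuousOn (fun v : ℝ => (a * v ^ p + b * v ^ q)⁻¹) (Set.Ioi 0))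
    {V : ℝ → ℝ} (hVdiff : Differentiable ℝ V)
    (hV : ∀ s ∈ Set.Icc (0:ℝ) t, r < V s)
    (hineq : ∀ s ∈ Set.Icc (0:ℝ) t, deriv V s ≤ -a * (V s) ^ p - b * (V s) ^ q)
    (ht : ∫ v in Set.Ioi r, (a * v ^ p + b * v ^ q)⁻¹ ≤ t) : False := by
  set h : ℝ → ℝ := fun v => (a * v ^ p + b * v ^ q)⁻¹ with hh
  have hdpos : ∀ v : ℝ, 0 < v → 0 < a * v ^ p + b * v ^ q := by
    intro v hv
    have h1 : 0 < v ^ p := Real.rpow_pos_of_pos hv p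
    have h2 : 0 < v ^ q := Real.rpow_pos_of_pos hv q
    positivity
  have hhpos : ∀ v : ℝ, 0 < v → 0 < h v := fun v hv => inv_pos.mpr (hdpos v hv)
  set M : ℝ := ∫ v in Set.Ioi r, h v with hM
  -- interval integrability on [r, x]
  have hii : ∀ x : ℝ, r ≤ x → IntervalIntegrable h volume r x := by
    intro x hx
    apply ContinuousOn.intervalIntegrable
    rw [Set.uIcc_of_le hx]
    exact hcont.mono (fun v hv => lt_of_lt_of_le hr hv.1)
  -- positivity of M
  have hM0 : 0 < M := by
    have h1 : (0:ℝ) < ∫ v in r..(r+1), h v := by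
      apply intervalIntegral.intervalIntegral_pos_of_pos_on (hii (r+1) (by linarith))
      · exact fun v hv => hhpos v (lt_trans hr hv.1)
      · linarith
    have h2 : (∫ v in r..(r+1), h v) ≤ M := by
      rw [intervalIntegral.integral_of_le (by linarith : r ≤ r+1)]
      apply MeasureTheory.setIntegral_mono_set hIntr
      · filter_upwards [MeasureTheory.ae_restrict_mem measurableSet_Ioi] with v hv
        exact (hhpos v (lt_trans hr hv)).le
      · exact HasSubset.Subset.eventuallyLE Set.Ioc_subset_Ioi_self
    linarith
  have ht0 : (0:ℝ) < t := lt_of_lt_of_le hM0 ht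
  -- the comparison function G
  set G : ℝ → ℝ := fun x => ∫ v in r..x, h v with hG
  have hGd : ∀ x : ℝ, r < x → HasDerivAt G (h x) x := by
    intro x hx
    apply intervalIntegral.integral_hasDerivAt_right (hii x hx.le)
    · exact ⟨Set.univ, Filter.univ_mem, hmeas'.aestronglyMeasurable.restrict⟩
    · exact hcont.continuousAt (isOpen_Ioi.mem_nhds (lt_trans hr hx))
  have hGle : ∀ x : ℝ, r ≤ x → G x ≤ M := by
    intro x hx
    rw [hG]
    simp only
    rw [intervalIntegral.integral_of_le hx]
    apply MeasureTheory.setIntegral_mono_set hIntr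
    · filter_upwards [MeasureTheory.ae_restrict_mem measurableSet_Ioi] with v hv
      exact (hhpos v (lt_trans hr hv)).le
    · exact HasSubset.Subset.eventuallyLE Set.Ioc_subset_Ioi_self
  have hGpos : ∀ x : ℝ, r < x → 0 < G x := by
    intro x hx
    apply intervalIntegral.intervalIntegral_pos_of_pos_on (hii x hx.le)
    · exact fun v hv => hhpos v (lt_trans hr hv.1)
    · exact hx
  -- the Lyapunov-like function F
  set F : ℝ → ℝ := fun s => G (V s) + s with hF
  have hFd : ∀ s ∈ Set.Icc (0:ℝ) t, HasDerivAt F (h (V s) * deriv V s + 1) s := by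
    intro s hs
    exact (((hGd (V s) (hV s hs)).comp s (hVdiff s).hasDerivAt).add
      (hasDerivAt_id s)).congr_deriv (by ring)
  have hFc : ContinuousOn F (Set.Icc 0 t) :=
    fun s hs => ((hFd s hs).continuousAt).continuousWithinAt
  have hFanti : AntitoneOn F (Set.Icc 0 t) := by
    apply antitoneOn_of_deriv_nonpos (convex_Icc 0 t) hFc
    · intro s hs
      rw [interior_Icc] at hs
      exact ((hFd s (Set.Ioo_subset_Icc_self hs)).differentiableAt).differentiableWithinAt
    · intro s hs
      rw [interior_Icc] at hs
      have hs' := Set.Ioo_subset_Icc_self hs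
      rw [(hFd s hs').deriv]
      have hVs0 : 0 < V s := lt_trans hr (hV s hs')
      have hD : 0 < a * (V s) ^ p + b * (V s) ^ q := hdpos _ hVs0
      have h1 : h (V s) * deriv V s ≤ h (V s) * (-a * (V s) ^ p - b * (V s) ^ q) :=
        mul_le_mul_of_nonneg_left (hineq s hs') (hhpos _ hVs0).le
      have h2 : h (V s) * (-a * (V s) ^ p - b * (V s) ^ q) = -1 := by
        rw [hh]
        field_simp
        ring
      linarith
  have hkey := hFanti (Set.left_mem_Icc.mpr ht0.le) (Set.right_mem_Icc.mpr ht0.le) ht0.le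
  have h0Icc : (0:ℝ) ∈ Set.Icc (0:ℝ) t := Set.left_mem_Icc.mpr ht0.le
  have htIcc : t ∈ Set.Icc (0:ℝ) t := Set.right_mem_Icc.mpr ht0.le
  have e1 : G (V t) + t ≤ G (V 0) + 0 := hkey
  have e2 : G (V 0) ≤ M := hGle _ (hV 0 h0Icc).le
  have e3 : 0 < G (V t) := hGpos _ (hV t htIcc)
  linarith

end FTprelude


set_option maxHeartbeats 1000000 in
/-- Lemma 4: settling-time estimate for rational exponents
`p = p₂/p₁ < 1 < q = q₂/q₁`. -/
theorem fixed_time_settling_time_rational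
    (p₁ p₂ q₁ q₂ : ℕ)
    (hp₁ : 0 < p₁) (hp₂ : 0 < p₂) (hq₁ : 0 < q₁) (hq₂ : 0 < q₂)
    (p q μ₁ μ₂ μ₃ τ : ℝ)
    (hpdef : p = (p₂ : ℝ) / p₁) (hqdef : q = (q₂ : ℝ) / q₁)
    (hp : 0 < p) (hp1 : p < 1) (hq : 1 < q)
    (hμ₁ : 0 < μ₁) (hμ₂ : 0 < μ₂) (hμ₃ : 0 < μ₃)
    (hτ : τ ∈ Set.Ioo (0 : ℝ) 1)
    (V : ℝ → ℝ) (hVdiff : Differentiable ℝ V)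
    (hVnonneg : ∀ t, 0 ≤ t → 0 ≤ V t)
    (hVineq : ∀ t, 0 ≤ t →
      deriv V t ≤ -μ₁ * (V t) ^ p - μ₂ * (V t) ^ q + μ₃) :
    ∀ t,
      max
        ((π / Real.sin (((1 - p) / (q - p)) * π)) / (τ * μ₁ * (q - p)) *
            (τ * μ₁ / μ₂) ^ ((1 - p) / (q - p))
          - Ief p₁ p₂ q₁ q₂ μ₁ μ₂
              ((μ₃ / ((1 - τ) * μ₁)) ^ (1 / ((p₂ : ℝ) * q₁)))
          + Ief p₁ p₂ q₁ q₂ μ₁ μ₂ 0)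
        ((π / Real.sin (((1 - p) / (q - p)) * π)) / (μ₁ * (q - p)) *
            (μ₁ / (τ * μ₂)) ^ ((1 - p) / (q - p))
          - Ief p₁ p₂ q₁ q₂ μ₁ μ₂
              ((μ₃ / ((1 - τ) * μ₂)) ^ (1 / ((p₁ : ℝ) * q₂)))
          + Ief p₁ p₂ q₁ q₂ μ₁ μ₂ 0)
        ≤ t →
      V t ≤ min ((μ₃ / ((1 - τ) * μ₁)) ^ (1 / p))
                ((μ₃ / ((1 - τ) * μ₂)) ^ (1 / q)) := by
  obtain ⟨hτ0, hτ1⟩ := hτ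
  intro t ht
  have h1τ : (0:ℝ) < 1 - τ := by linarith
  set K₁ : ℝ := μ₃ / ((1 - τ) * μ₁) with hK₁def
  set K₂ : ℝ := μ₃ / ((1 - τ) * μ₂) with hK₂def
  have hK₁ : 0 < K₁ := by rw [hK₁def]; positivity
  have hK₂ : 0 < K₂ := by rw [hK₂def]; positivity
  set R₁ : ℝ := K₁ ^ (1 / p) with hR₁def
  set R₂ : ℝ := K₂ ^ (1 / q) with hR₂def
  have hR₁ : 0 < R₁ := Real.rpow_pos_of_pos hK₁ _
  have hR₂ : 0 < R₂ := Real.rpow_pos_of_pos hK₂ _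
  have hq0 : (0:ℝ) < q := lt_trans zero_lt_one hq
  have hR₁p : R₁ ^ p = K₁ := by
    rw [hR₁def, ← Real.rpow_mul hK₁.le, one_div, inv_mul_cancel₀ hp.ne', Real.rpow_one]
  have hR₂q : R₂ ^ q = K₂ := by
    rw [hR₂def, ← Real.rpow_mul hK₂.le, one_div, inv_mul_cancel₀ hq0.ne', Real.rpow_one]
  -- derivative is negative whenever V ≥ min R₁ R₂
  have hdneg : ∀ s, 0 ≤ s → min R₁ R₂ ≤ V s → deriv V s < 0 := by
    intro s hs hRV
    clear ht
    have hVs : 0 ≤ V s := hVnonneg s hs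
    have hVp : 0 ≤ (V s) ^ p := Real.rpow_nonneg hVs p
    have hVq : 0 ≤ (V s) ^ q := Real.rpow_nonneg hVs q
    have hm1 : 0 ≤ μ₁ * (V s) ^ p := mul_nonneg hμ₁.le hVp
    have hm2 : 0 ≤ μ₂ * (V s) ^ q := mul_nonneg hμ₂.le hVq
    have hd := hVineq s hs
    have hlt : μ₃ < μ₃ / (1 - τ) := by
      rw [lt_div_iff₀ h1τ]; nlinarith
    rcases min_cases R₁ R₂ with ⟨hmin, _⟩ | ⟨hmin, _⟩
    · rw [hmin] at hRV
      have h1 : K₁ ≤ (V s) ^ p := by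
        rw [← hR₁p]; exact Real.rpow_le_rpow hR₁.le hRV hp.le
      have h2 : μ₃ / (1 - τ) ≤ μ₁ * (V s) ^ p := by
        have hKK : μ₁ * K₁ = μ₃ / (1 - τ) := by rw [hK₁def]; field_simp
        calc μ₃ / (1 - τ) = μ₁ * K₁ := hKK.symm
          _ ≤ μ₁ * (V s) ^ p := mul_le_mul_of_nonneg_left h1 hμ₁.le
      linarith
    · rw [hmin] at hRV
      have h1 : K₂ ≤ (V s) ^ q := by
        rw [← hR₂q]; exact Real.rpow_le_rpow hR₂.le hRV hq0.le
      have h2 : μ₃ / (1 - τ) ≤ μ₂ * (V s) ^ q := by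
        have hKK : μ₂ * K₂ = μ₃ / (1 - τ) := by rw [hK₂def]; field_simp
        calc μ₃ / (1 - τ) = μ₂ * K₂ := hKK.symm
          _ ≤ μ₂ * (V s) ^ q := mul_le_mul_of_nonneg_left h1 hμ₂.le
      linarith
  -- the settling phase
  have hIef0 : Ief p₁ p₂ q₁ q₂ μ₁ μ₂ 0 = 0 := intervalIntegral.integral_same
  have hreach : ∃ t₀ ∈ Set.Icc (0:ℝ) t, V t₀ ≤ min R₁ R₂ := by
    by_contra hno
    push_neg at hno
    rcases le_total R₁ R₂ with hcase | hcase
    · -- min = R₁, use a = τμ₁, b = μ₂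
      have hmin : min R₁ R₂ = R₁ := min_eq_left hcase
      have ha : 0 < τ * μ₁ := mul_pos hτ0 hμ₁
      refine reach hp hp1 hq ha hμ₂ hR₁
        (((hinteg hp1 hq ha hμ₂).mono_set (Set.Ioi_subset_Ioi hR₁.le)))
        (hcont ha hμ₂) hVdiff
        (fun s hs => hmin ▸ hno s hs) ?_ ?_
      · -- differential inequality with τμ₁
        intro s hs
        clear ht
        have hRV : R₁ < V s := hmin ▸ hno s hs
        have hVs : 0 ≤ V s := hVnonneg s hs.1
        have h1 : K₁ ≤ (V s) ^ p := by
          rw [← hR₁p]; exact Real.rpow_le_rpow hR₁.le hRV.le hp.le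
        have h2 : μ₃ ≤ (1 - τ) * μ₁ * (V s) ^ p := by
          have hK : (1 - τ) * μ₁ * K₁ = μ₃ := by rw [hK₁def]; field_simp
          calc μ₃ = (1 - τ) * μ₁ * K₁ := hK.symm
            _ ≤ (1 - τ) * μ₁ * (V s) ^ p :=
                mul_le_mul_of_nonneg_left h1 (by positivity)
        have := hVineq s hs.1
        nlinarith
      · -- the time bound
        have hx₁ : (0:ℝ) ≤ K₁ ^ (1 / ((p₂ : ℝ) * q₁)) := (Real.rpow_pos_of_pos hK₁ _).le
        have hxn : (K₁ ^ (1 / ((p₂ : ℝ) * q₁))) ^ (p₁ * q₁) = R₁ := by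
          rw [← Real.rpow_natCast (K₁ ^ (1 / ((p₂ : ℝ) * q₁))) (p₁ * q₁),
            ← Real.rpow_mul hK₁.le, hR₁def]
          congr 1
          have hp₁' : ((p₁:ℝ)) ≠ 0 := Nat.cast_ne_zero.mpr hp₁.ne'
          have hp₂' : ((p₂:ℝ)) ≠ 0 := Nat.cast_ne_zero.mpr hp₂.ne'
          have hq₁' : ((q₁:ℝ)) ≠ 0 := Nat.cast_ne_zero.mpr hq₁.ne'
          rw [hpdef]
          push_cast
          field_simp
        -- Ief μ₁ μ₂ x₁ ≤ ∫ over Ioo 0 R₁ of (τμ₁ v^p + μ₂ v^q)⁻¹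
        have hIefle : Ief p₁ p₂ q₁ q₂ μ₁ μ₂ (K₁ ^ (1 / ((p₂ : ℝ) * q₁)))
            ≤ ∫ v in Set.Ioc (0:ℝ) R₁, (τ * μ₁ * v ^ p + μ₂ * v ^ q)⁻¹ := by
          rw [Ief_eq p₁ p₂ q₁ q₂ hp₁ hp₂ hq₁ hq₂ hμ₁ hμ₂ hx₁ hpdef hqdef, hxn,
            MeasureTheory.integral_Ioc_eq_integral_Ioo]
          apply MeasureTheory.setIntegral_mono_on
          · exact ((hinteg hp1 hq hμ₁ hμ₂).mono_set
              (fun v hv => hv.1 : Set.Ioo (0:ℝ) R₁ ⊆ Set.Ioi 0))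
          · exact ((hinteg hp1 hq ha hμ₂).mono_set
              (fun v hv => hv.1 : Set.Ioo (0:ℝ) R₁ ⊆ Set.Ioi 0))
          · exact measurableSet_Ioo
          · intro v hv
            have hv0 := hv.1
            have hvp : 0 < v ^ p := Real.rpow_pos_of_pos hv0 p
            have hvq : 0 < v ^ q := Real.rpow_pos_of_pos hv0 q
            apply inv_anti₀ (by positivity)
            have h3 : τ * μ₁ * v ^ p ≤ μ₁ * v ^ p := by nlinarith [mul_pos hμ₁ hvp]
            linarith
        -- split the full integral
        have hsplit : (∫ v in Set.Ioi (0:ℝ), (τ * μ₁ * v ^ p + μ₂ * v ^ q)⁻¹)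
            = (∫ v in Set.Ioc (0:ℝ) R₁, (τ * μ₁ * v ^ p + μ₂ * v ^ q)⁻¹)
              + ∫ v in Set.Ioi R₁, (τ * μ₁ * v ^ p + μ₂ * v ^ q)⁻¹ := by
          rw [← Set.Ioc_union_Ioi_eq_Ioi hR₁.le]
          exact MeasureTheory.setIntegral_union
            (Set.Ioc_disjoint_Ioi (le_refl R₁)) measurableSet_Ioi
            ((hinteg hp1 hq ha hμ₂).mono_set (fun v hv => hv.1))
            ((hinteg hp1 hq ha hμ₂).mono_set (Set.Ioi_subset_Ioi hR₁.le))
        have hval := hvalue hp hp1 hq ha hμ₂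
        have hmax := le_trans (le_max_left _ _) ht
        rw [hIef0, add_zero] at hmax
        linarith [hIefle, hsplit, hval, hmax]
    · -- min = R₂, use a = μ₁, b = τμ₂
      have hmin : min R₁ R₂ = R₂ := min_eq_right hcase
      have hb : 0 < τ * μ₂ := mul_pos hτ0 hμ₂
      refine reach hp hp1 hq hμ₁ hb hR₂
        (((hinteg hp1 hq hμ₁ hb).mono_set (Set.Ioi_subset_Ioi hR₂.le)))
        (hcont hμ₁ hb) hVdiff
        (fun s hs => hmin ▸ hno s hs) ?_ ?_
      · intro s hs
        clear ht
        have hRV : R₂ < V s := hmin ▸ hno s hs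
        have hVs : 0 ≤ V s := hVnonneg s hs.1
        have h1 : K₂ ≤ (V s) ^ q := by
          rw [← hR₂q]; exact Real.rpow_le_rpow hR₂.le hRV.le hq0.le
        have h2 : μ₃ ≤ (1 - τ) * μ₂ * (V s) ^ q := by
          have hK : (1 - τ) * μ₂ * K₂ = μ₃ := by rw [hK₂def]; field_simp
          calc μ₃ = (1 - τ) * μ₂ * K₂ := hK.symm
            _ ≤ (1 - τ) * μ₂ * (V s) ^ q :=
                mul_le_mul_of_nonneg_left h1 (by positivity)
        have := hVineq s hs.1
        nlinarith
      · have hx₂ : (0:ℝ) ≤ K₂ ^ (1 / ((p₁ : ℝ) * q₂)) := (Real.rpow_pos_of_pos hK₂ _).le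
        have hxn : (K₂ ^ (1 / ((p₁ : ℝ) * q₂))) ^ (p₁ * q₁) = R₂ := by
          rw [← Real.rpow_natCast (K₂ ^ (1 / ((p₁ : ℝ) * q₂))) (p₁ * q₁),
            ← Real.rpow_mul hK₂.le, hR₂def]
          congr 1
          have hp₁' : ((p₁:ℝ)) ≠ 0 := Nat.cast_ne_zero.mpr hp₁.ne'
          have hq₁' : ((q₁:ℝ)) ≠ 0 := Nat.cast_ne_zero.mpr hq₁.ne'
          have hq₂' : ((q₂:ℝ)) ≠ 0 := Nat.cast_ne_zero.mpr hq₂.ne'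
          rw [hqdef]
          push_cast
          field_simp
        have hIefle : Ief p₁ p₂ q₁ q₂ μ₁ μ₂ (K₂ ^ (1 / ((p₁ : ℝ) * q₂)))
            ≤ ∫ v in Set.Ioc (0:ℝ) R₂, (μ₁ * v ^ p + τ * μ₂ * v ^ q)⁻¹ := by
          rw [Ief_eq p₁ p₂ q₁ q₂ hp₁ hp₂ hq₁ hq₂ hμ₁ hμ₂ hx₂ hpdef hqdef, hxn,
            MeasureTheory.integral_Ioc_eq_integral_Ioo]
          apply MeasureTheory.setIntegral_mono_on
          · exact ((hinteg hp1 hq hμ₁ hμ₂).mono_set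
              (fun v hv => hv.1 : Set.Ioo (0:ℝ) R₂ ⊆ Set.Ioi 0))
          · exact ((hinteg hp1 hq hμ₁ hb).mono_set
              (fun v hv => hv.1 : Set.Ioo (0:ℝ) R₂ ⊆ Set.Ioi 0))
          · exact measurableSet_Ioo
          · intro v hv
            have hv0 := hv.1
            have hvp : 0 < v ^ p := Real.rpow_pos_of_pos hv0 p
            have hvq : 0 < v ^ q := Real.rpow_pos_of_pos hv0 q
            apply inv_anti₀ (by positivity)
            have h3 : τ * μ₂ * v ^ q ≤ μ₂ * v ^ q := by nlinarith [mul_pos hμ₂ hvq]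
            linarith
        have hsplit : (∫ v in Set.Ioi (0:ℝ), (μ₁ * v ^ p + τ * μ₂ * v ^ q)⁻¹)
            = (∫ v in Set.Ioc (0:ℝ) R₂, (μ₁ * v ^ p + τ * μ₂ * v ^ q)⁻¹)
              + ∫ v in Set.Ioi R₂, (μ₁ * v ^ p + τ * μ₂ * v ^ q)⁻¹ := by
          rw [← Set.Ioc_union_Ioi_eq_Ioi hR₂.le]
          exact MeasureTheory.setIntegral_union
            (Set.Ioc_disjoint_Ioi (le_refl R₂)) measurableSet_Ioi
            ((hinteg hp1 hq hμ₁ hb).mono_set (fun v hv => hv.1))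
            ((hinteg hp1 hq hμ₁ hb).mono_set (Set.Ioi_subset_Ioi hR₂.le))
        have hval := hvalue hp hp1 hq hμ₁ hb
        have hmax := le_trans (le_max_right _ _) ht
        rw [hIef0, add_zero] at hmax
        linarith [hIefle, hsplit, hval, hmax]
  obtain ⟨t₀, ht₀, hVt₀⟩ := hreach
  exact barrier hVdiff hdneg ht₀.1 ht₀.2 hVt₀
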